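/- Every hereditary class of graphs that contains, for every n, a graph G_n with a clique of size n and an independent set of size n, contains as a subclass either the class S of all graphs partitionable into a clique and a set of isolated vertices, or the class of complements of graphs in S. -/

import Mathlib

/-- A set of vertices is independent if no two of its vertices are adjacent. -/
def SimpleGraph.IsIndepSet' {V : Type} (G : SimpleGraph V) (s : Set V) : Prop :=
  s.Pairwise fun a b => ¬ G.Adj a b

/-- `G` is partitionable into a clique and a set of isolated vertices. -/
def IsCliquePlusIsolated {V : Type} (G : SimpleGraph V) : Prop :=
  ∃ K : Set V, G.IsClique K ∧ ∀ v ∉ K, ∀ u, ¬ G.Adj v u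

open Finset

section Aux

open scoped Classical

/-- Bipartite Ramsey-type halving lemma. -/
lemma halving_lemma {V : Type} (G : SimpleGraph V) :
    ∀ (m n : ℕ) (A B : Finset V), m ≤ A.card → n * 2 ^ m ≤ B.card →
      ∃ A₀ A₁ B' : Finset V, A₀ ⊆ A ∧ A₁ ⊆ A ∧ B' ⊆ B ∧
        A₀.card + A₁.card = m ∧ n ≤ B'.card ∧
        (∀ a ∈ A₀, ∀ b ∈ B', ¬ G.Adj a b) ∧ (∀ a ∈ A₁, ∀ b ∈ B', G.Adj a b) := by
  intro m
  induction m with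
  | zero =>
    intro n A B _ hB
    exact ⟨∅, ∅, B, empty_subset _, empty_subset _, Finset.Subset.refl _, by simp,
      by simpa using hB, by simp, by simp⟩
  | succ m ih =>
    intro n A B hA hB
    obtain ⟨a, ha⟩ : A.Nonempty := Finset.card_pos.mp (by omega)
    set B₁ := B.filter (fun b => G.Adj a b) with hB₁def
    set B₀ := B.filter (fun b => ¬ G.Adj a b) with hB₀def
    have hsplit : B₁.card + B₀.card = B.card := by
      rw [hB₁def, hB₀def]
      exact Finset.card_filter_add_card_filter_not _
    have hpow : n * 2 ^ (m + 1) = n * 2 ^ m + n * 2 ^ m := by ring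
    have hcases : n * 2 ^ m ≤ B₀.card ∨ n * 2 ^ m ≤ B₁.card := by omega
    have hAe : m ≤ (A.erase a).card := by
      rw [Finset.card_erase_of_mem ha]; omega
    rcases hcases with h0 | h1
    · obtain ⟨A₀, A₁, B', hA₀, hA₁, hB', hcard, hB'card, hneg, hpos⟩ :=
        ih n (A.erase a) B₀ hAe h0
      have haA₀ : a ∉ A₀ := fun h => (Finset.mem_erase.mp (hA₀ h)).1 rfl
      refine ⟨insert a A₀, A₁, B', ?_, fun x hx => (Finset.mem_erase.mp (hA₁ hx)).2,
        hB'.trans (Finset.filter_subset _ _), ?_, hB'card, ?_, hpos⟩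
      · exact Finset.insert_subset ha (hA₀.trans (Finset.erase_subset _ _))
      · rw [Finset.card_insert_of_notMem haA₀]; omega
      · intro x hx b hb
        rcases Finset.mem_insert.mp hx with rfl | hx
        · exact (Finset.mem_filter.mp (hB' hb)).2
        · exact hneg x hx b hb
    · obtain ⟨A₀, A₁, B', hA₀, hA₁, hB', hcard, hB'card, hneg, hpos⟩ :=
        ih n (A.erase a) B₁ hAe h1
      have haA₁ : a ∉ A₁ := fun h => (Finset.mem_erase.mp (hA₁ h)).1 rfl
      refine ⟨A₀, insert a A₁, B', fun x hx => (Finset.mem_erase.mp (hA₀ hx)).2,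
        Finset.insert_subset ha (hA₁.trans (Finset.erase_subset _ _)),
        hB'.trans (Finset.filter_subset _ _), ?_, hB'card, hneg, ?_⟩
      · rw [Finset.card_insert_of_notMem haA₁]; omega
      · intro x hx b hb
        rcases Finset.mem_insert.mp hx with rfl | hx
        · exact (Finset.mem_filter.mp (hB' hb)).2
        · exact hpos x hx b hb

/-- Embedding a "split-like" graph into a graph with a suitable clique/independent
set configuration. -/
lemma split_embedding {W V : Type} [Fintype W] (H : SimpleGraph W) (G : SimpleGraph V)
    (P : W → Prop) (c : Prop) (A B : Finset V) (hdisj : Disjoint A B)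
    (hAcard : (Finset.univ.filter P).card ≤ A.card)
    (hBcard : (Finset.univ.filter (fun w => ¬ P w)).card ≤ B.card)
    (hclique : G.IsClique (↑A : Set V)) (hindep : G.IsIndepSet' (↑B : Set V))
    (hcross : ∀ a ∈ A, ∀ b ∈ B, (G.Adj a b ↔ c))
    (hadj : ∀ u v, H.Adj u v ↔ u ≠ v ∧ ((P u ∧ P v) ∨ (c ∧ (P u ∨ P v)))) :
    Nonempty (H ↪g G) := by
  obtain ⟨A', hA'sub, hA'card⟩ := Finset.exists_subset_card_eq hAcard
  obtain ⟨B', hB'sub, hB'card⟩ := Finset.exists_subset_card_eq hBcard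
  have e₁ : {x // x ∈ Finset.univ.filter P} ≃ {x // x ∈ A'} :=
    Fintype.equivOfCardEq (by simp only [Fintype.card_coe]; omega)
  have e₂ : {x // x ∈ Finset.univ.filter (fun w => ¬ P w)} ≃ {x // x ∈ B'} :=
    Fintype.equivOfCardEq (by simp only [Fintype.card_coe]; omega)
  set f : W → V := fun w =>
    if h : P w then (e₁ ⟨w, Finset.mem_filter.mpr ⟨Finset.mem_univ w, h⟩⟩ : V)
    else (e₂ ⟨w, Finset.mem_filter.mpr ⟨Finset.mem_univ w, h⟩⟩ : V) with hf
  have hfA : ∀ w, P w → f w ∈ A := by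
    intro w h
    simp only [hf, dif_pos h]
    exact hA'sub (e₁ _).2
  have hfB : ∀ w, ¬ P w → f w ∈ B := by
    intro w h
    simp only [hf, dif_neg h]
    exact hB'sub (e₂ _).2
  have hinj : Function.Injective f := by
    intro u v huv
    by_cases hu : P u <;> by_cases hv : P v
    · simp only [hf, dif_pos hu, dif_pos hv] at huv
      have := e₁.injective (Subtype.ext huv)
      exact congrArg Subtype.val this
    · exact absurd ((huv ▸ hfA u hu)) (Finset.disjoint_right.mp hdisj (hfB v hv))
    · exact absurd ((huv ▸ hfB u hu)) (Finset.disjoint_right.mp (hdisj.symm) (hfA v hv))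
    · simp only [hf, dif_neg hu, dif_neg hv] at huv
      have := e₂.injective (Subtype.ext huv)
      exact congrArg Subtype.val this
  refine ⟨⟨⟨f, hinj⟩, ?_⟩⟩
  intro u v
  show G.Adj (f u) (f v) ↔ H.Adj u v
  rw [hadj]
  by_cases hu : P u <;> by_cases hv : P v
  · constructor
    · intro h
      have hne : u ≠ v := fun e => G.irrefl (e ▸ h)
      exact ⟨hne, Or.inl ⟨hu, hv⟩⟩
    · rintro ⟨hne, -⟩
      exact hclique (hfA u hu) (hfA v hv) (fun e => hne (hinj e))
  · have hne : u ≠ v := fun e => hv (e ▸ hu)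
    rw [hcross _ (hfA u hu) _ (hfB v hv)]
    constructor
    · intro h; exact ⟨hne, Or.inr ⟨h, Or.inl hu⟩⟩
    · rintro ⟨-, (⟨-, h⟩ | ⟨h, -⟩)⟩
      · exact absurd h hv
      · exact h
  · have hne : u ≠ v := fun e => hu (e ▸ hv)
    rw [G.adj_comm, hcross _ (hfA v hv) _ (hfB u hu)]
    constructor
    · intro h; exact ⟨hne, Or.inr ⟨h, Or.inr hv⟩⟩
    · rintro ⟨-, (⟨h, -⟩ | ⟨h, -⟩)⟩
      · exact absurd h hu
      · exact h
  · constructor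
    · intro h
      have hne : u ≠ v := fun e => G.irrefl (e ▸ h)
      exact absurd h (hindep (hfB u hu) (hfB v hv) (fun e => hne (hinj e)))
    · rintro ⟨-, (⟨h, -⟩ | ⟨-, (h | h)⟩)⟩
      · exact absurd h hu
      · exact absurd h hu
      · exact absurd h hv

end Aux

/-- Every hereditary class of graphs containing, for every `n`, a graph with a clique of size
`n` and an independent set of size `n`, contains as a subclass either the class `S` of graphs
partitionable into a clique and isolated vertices, or the class of complements of such
graphs. -/
theorem minimal_classes_complex_number (C : ∀ V : Type, SimpleGraph V → Prop)
    (hered : ∀ (V W : Type) (G : SimpleGraph V) (H : SimpleGraph W),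
      C V G → (H ↪g G) → C W H)
    (hbig : ∀ n : ℕ, ∃ (V : Type) (G : SimpleGraph V), C V G ∧
      (∃ s : Finset V, G.IsNClique n s) ∧
      (∃ s : Finset V, s.card = n ∧ G.IsIndepSet' (↑s : Set V))) :
    (∀ (V : Type), Fintype V → ∀ G : SimpleGraph V, IsCliquePlusIsolated G → C V G) ∨
    (∀ (V : Type), Fintype V → ∀ G : SimpleGraph V, IsCliquePlusIsolated Gᶜ → C V G) := by
  classical
  -- configuration predicate
  let HasConfig : ∀ {V : Type}, SimpleGraph V → Bool → ℕ → Prop :=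
    fun {V} G c n => ∃ A B : Finset V, Disjoint A B ∧ n ≤ A.card ∧ n ≤ B.card ∧
      G.IsClique (↑A : Set V) ∧ G.IsIndepSet' (↑B : Set V) ∧
      ∀ a ∈ A, ∀ b ∈ B, (G.Adj a b ↔ c = true)
  have mono : ∀ {V : Type} (G : SimpleGraph V) (c : Bool) {m n : ℕ}, m ≤ n →
      HasConfig G c n → HasConfig G c m := by
    rintro V G c m n h ⟨A, B, h1, h2, h3, h4, h5, h6⟩
    exact ⟨A, B, h1, h.trans h2, h.trans h3, h4, h5, h6⟩
  have key : ∀ n : ℕ, (∃ (V : Type) (G : SimpleGraph V), C V G ∧ HasConfig G false n) ∨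
      (∃ (V : Type) (G : SimpleGraph V), C V G ∧ HasConfig G true n) := by
    intro n
    obtain ⟨V, G, hC, ⟨s, hs⟩, ⟨t, htcard, htind⟩⟩ := hbig (n * 2 ^ (2 * n) + 2 * n + 1)
    have hint : (s ∩ t).card ≤ 1 := by
      rw [Finset.card_le_one]
      intro a ha b hb
      by_contra hne
      have hadj := hs.isClique (Finset.mem_coe.mpr (Finset.mem_of_mem_inter_left ha))
        (Finset.mem_coe.mpr (Finset.mem_of_mem_inter_left hb)) hne
      exact htind (Finset.mem_coe.mpr (Finset.mem_of_mem_inter_right ha))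
        (Finset.mem_coe.mpr (Finset.mem_of_mem_inter_right hb)) hne hadj
    have hAB1 := Finset.card_inter_add_card_sdiff s t
    have hAB2 := Finset.card_inter_add_card_sdiff t s
    rw [Finset.inter_comm] at hAB2
    have hscard := hs.card_eq
    have hA : 2 * n ≤ (s \ t).card := by omega
    have hB : n * 2 ^ (2 * n) ≤ (t \ s).card := by omega
    obtain ⟨A₀, A₁, B', hA₀, hA₁, hB', hcard, hB'card, hneg, hpos⟩ :=
      halving_lemma G (2 * n) n (s \ t) (t \ s) hA hB
    have hdisjst : Disjoint (s \ t) (t \ s) := disjoint_sdiff_sdiff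
    rcases (show n ≤ A₀.card ∨ n ≤ A₁.card by omega) with h | h
    · refine Or.inl ⟨V, G, hC, A₀, B', hdisjst.mono hA₀ hB', h, hB'card, ?_, ?_, ?_⟩
      · exact hs.isClique.subset (fun x hx => (Finset.mem_sdiff.mp (hA₀ hx)).1)
      · exact htind.mono (fun x hx => (Finset.mem_sdiff.mp (hB' hx)).1)
      · intro a ha b hb
        simp [hneg a ha b hb]
    · refine Or.inr ⟨V, G, hC, A₁, B', hdisjst.mono hA₁ hB', h, hB'card, ?_, ?_, ?_⟩
      · exact hs.isClique.subset (fun x hx => (Finset.mem_sdiff.mp (hA₁ hx)).1)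
      · exact htind.mono (fun x hx => (Finset.mem_sdiff.mp (hB' hx)).1)
      · intro a ha b hb
        simp [hpos a ha b hb]
  by_cases hall : ∀ n : ℕ, ∃ (V : Type) (G : SimpleGraph V), C V G ∧ HasConfig G false n
  · left
    intro V _inst G hG
    obtain ⟨K, hK, hiso⟩ := hG
    obtain ⟨V', G', hCV', A, B, hdisj, hAc, hBc, hclique, hindep, hcross⟩ :=
      hall (Fintype.card V)
    have hemb : Nonempty (G ↪g G') := by
      refine split_embedding G G' (fun w => w ∈ K) (false = true) A B hdisj ?_ ?_ hclique
        hindep (fun a ha b hb => by simpa using hcross a ha b hb) ?_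
      · exact le_trans (le_trans (Finset.card_le_univ _) (by simp)) hAc
      · exact le_trans (le_trans (Finset.card_le_univ _) (by simp)) hBc
      · intro u v
        simp only [Bool.false_eq_true, false_and, or_false]
        constructor
        · intro h
          refine ⟨h.ne, ?_, ?_⟩
          · by_contra hu; exact hiso u hu v h
          · by_contra hv; exact hiso v hv u h.symm
        · rintro ⟨hne, hu, hv⟩
          exact hK hu hv hne
    exact hered V' V G' G hCV' hemb.some
  · right
    push_neg at hall
    obtain ⟨n₀, hn₀⟩ := hall
    have hallT : ∀ n : ℕ, ∃ (V : Type) (G : SimpleGraph V), C V G ∧ HasConfig G true n := by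
      intro n
      rcases key (n + n₀) with ⟨V, G, hC, hcfg⟩ | ⟨V, G, hC, hcfg⟩
      · exact (hn₀ V G hC (mono G false (by omega) hcfg)).elim
      · exact ⟨V, G, hC, mono G true (by omega) hcfg⟩
    intro V _inst G hG
    obtain ⟨K, hK, hiso⟩ := hG
    obtain ⟨V', G', hCV', A, B, hdisj, hAc, hBc, hclique, hindep, hcross⟩ :=
      hallT (Fintype.card V)
    have hemb : Nonempty (G ↪g G') := by
      refine split_embedding G G' (fun w => w ∉ K) (true = true) A B hdisj ?_ ?_ hclique
        hindep (fun a ha b hb => by simpa using hcross a ha b hb) ?_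
      · exact le_trans (le_trans (Finset.card_le_univ _) (by simp)) hAc
      · exact le_trans (le_trans (Finset.card_le_univ _) (by simp)) hBc
      · intro u v
        constructor
        · intro h
          refine ⟨h.ne, ?_⟩
          by_cases hu : u ∈ K
          · by_cases hv : v ∈ K
            · exact absurd (hK hu hv h.ne).2 (by simpa using h)
            · exact Or.inr ⟨rfl, Or.inr hv⟩
          · exact Or.inr ⟨rfl, Or.inl hu⟩
        · rintro ⟨hne, (⟨hu, -⟩ | ⟨-, (hu | hv)⟩)⟩
          · have := hiso u hu v
            rw [SimpleGraph.compl_adj] at this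
            push_neg at this
            exact this hne
          · have := hiso u hu v
            rw [SimpleGraph.compl_adj] at this
            push_neg at this
            exact this hne
          · have := hiso v hv u
            rw [SimpleGraph.compl_adj] at this
            push_neg at this
            exact (this (Ne.symm hne)).symm
    exact hered V' V G' G hCV' hemb.some
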